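/- Let C > 0 be a real constant and let F : ℕ × ℕ → ℝ be a function satisfying F(n, 1) ≤ C·n for all n ≥ 0, and, for all k ≥ 2 and all n ≥ 0, F(n, k) ≤ max_{0 ≤ j ≤ n} ( F(j, ⌊k/2⌋) + F(n − j, k − ⌊k/2⌋) ) + C·n·k. Then F(n, k) ≤ 3·C·k·n for all n ≥ 0 and k ≥ 1. -/

import Mathlib

/-- If `C > 0` and `F : ℕ × ℕ → ℝ` satisfies `F(n, 1) ≤ C·n` for
all `n ≥ 0` and, for all `k ≥ 2` and `n ≥ 0`,
`F(n, k) ≤ max_{0 ≤ j ≤ n} ( F(j, ⌊k/2⌋) + F(n − j, k − ⌊k/2⌋) ) + C·n·k`,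
then `F(n, k) ≤ 3·C·k·n` for all `n ≥ 0` and `k ≥ 1`. -/
theorem divide_and_conquer_time_bound (C : ℝ) (hC : 0 < C) (F : ℕ × ℕ → ℝ)
    (hbase : ∀ n : ℕ, F (n, 1) ≤ C * n)
    (hrec : ∀ n k : ℕ, 2 ≤ k →
      F (n, k) ≤ (Finset.Icc 0 n).sup' ⟨0, by simp⟩
          (fun j => F (j, k / 2) + F (n - j, k - k / 2)) + C * n * k) :
    ∀ n k : ℕ, 1 ≤ k → F (n, k) ≤ 3 * C * k * n := by
  intro n k
  induction k using Nat.strong_induction_on generalizing n with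
  | _ k ih =>
    intro hk
    rcases Nat.lt_or_ge k 2 with h2 | h2
    · interval_cases k
      have := hbase n
      push_cast
      nlinarith [mul_nonneg hC.le (Nat.cast_nonneg (α := ℝ) n)]
    · have key : F (n, k) ≤ _ := hrec n k h2
      refine key.trans ?_
      have hsup : (Finset.Icc 0 n).sup' ⟨0, by simp⟩
          (fun j => F (j, k / 2) + F (n - j, k - k / 2)) ≤
          3 * C * (k - k / 2 : ℕ) * n := by
        apply Finset.sup'_le
        intro j hj
        have hjn : j ≤ n := (Finset.mem_Icc.mp hj).2
        have h1 : F (j, k / 2) ≤ 3 * C * (k / 2 : ℕ) * j :=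
          ih (k / 2) (by omega) j (by omega)
        have h2' : F (n - j, k - k / 2) ≤ 3 * C * (k - k / 2 : ℕ) * (n - j : ℕ) :=
          ih (k - k / 2) (by omega) (n - j) (by omega)
        have hab : (k / 2 : ℕ) ≤ k - k / 2 := by omega
        have hcast : ((n - j : ℕ) : ℝ) = (n : ℝ) - j := by
          push_cast [Nat.cast_sub hjn]; ring
        have hjr : (j : ℝ) ≤ n := by exact_mod_cast hjn
        have habr : ((k / 2 : ℕ) : ℝ) ≤ ((k - k / 2 : ℕ) : ℝ) := by exact_mod_cast hab
        calc F (j, k / 2) + F (n - j, k - k / 2)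
            ≤ 3 * C * (k / 2 : ℕ) * j + 3 * C * (k - k / 2 : ℕ) * (n - j : ℕ) := by
              linarith
          _ ≤ 3 * C * (k - k / 2 : ℕ) * n := by
              rw [hcast]
              nlinarith [mul_nonneg (mul_nonneg hC.le (Nat.cast_nonneg (α := ℝ) j)) (sub_nonneg.mpr habr)]
      refine (add_le_add_left hsup _).trans ?_
      have h3b : 3 * (k - k / 2) ≤ 2 * k := by omega
      have h3br : 3 * ((k - k / 2 : ℕ) : ℝ) ≤ 2 * k := by exact_mod_cast h3b
      nlinarith [mul_nonneg (mul_nonneg hC.le (Nat.cast_nonneg (α := ℝ) n)) (by linarith : (0:ℝ) ≤ 2 * (k:ℝ) - 3 * ((k - k / 2 : ℕ) : ℝ))]
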